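/- Let 1 ≤ p < q < ∞ and 0 < ε < 1/e. There is a universal constant C > 0 (independent of n, p, q, ε and s; C = 5 suffices) such that: if a vector x ∈ ℝⁿ has an (ε, ℓ_p, s)-norm sparsifier for some positive integer s, then x also has an (ε, ℓ_q, C·s)-norm sparsifier; in fact x_head(k) is such a sparsifier for a suitable integer k ≤ C·s. -/

import Mathlib

open scoped BigOperators ENNReal
open Matrix

/-- Number of nonzero entries of a vector. -/
noncomputable def nnzv {n : ℕ} (x : Fin n → ℝ) : ℕ :=
  (Finset.univ.filter fun i => x i ≠ 0).card

/-- The ℓ_p norm of a vector, for a real exponent `p`. -/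
noncomputable def lpNorm {n : ℕ} (p : ℝ) (x : Fin n → ℝ) : ℝ :=
  (∑ i, |x i| ^ p) ^ (1 / p)

/-- `IsHead x c y` : `y` is obtained from `x` by keeping (at most) `c` entries that are
largest in absolute value (exactly `min c n` of them, ties broken arbitrarily) and zeroing out the rest. -/
def IsHead {n : ℕ} (x : Fin n → ℝ) (c : ℕ) (y : Fin n → ℝ) : Prop :=
  ∃ T : Finset (Fin n), T.card = min c n ∧ (∀ i ∈ T, y i = x i) ∧ (∀ i ∉ T, y i = 0) ∧
    ∀ i ∈ T, ∀ j ∉ T, |x j| ≤ |x i|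

/-- The singular values of a real matrix: square roots of the eigenvalues of `Aᵀ * A`. -/
noncomputable def singVals {m n : Type*} [Fintype m] [Fintype n] [DecidableEq n]
    (A : Matrix m n ℝ) : n → ℝ :=
  fun j => Real.sqrt (((show (Aᵀ * A).IsHermitian from Matrix.isHermitian_conjTranspose_mul_self A)).eigenvalues j)

/-- The Schatten p-(quasi)norm of a real matrix, for a real exponent `p > 0`. -/
noncomputable def schattenF {m n : Type*} [Fintype m] [Fintype n] [DecidableEq n]
    (p : ℝ) (A : Matrix m n ℝ) : ℝ :=
  (∑ j, singVals A j ^ p) ^ (1 / p)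

/-- The spectral norm (Schatten ∞-norm): the largest singular value. -/
noncomputable def specNorm {m n : Type*} [Fintype m] [Fintype n] [DecidableEq n]
    (A : Matrix m n ℝ) : ℝ :=
  ⨆ j, singVals A j

open Classical in
/-- The Schatten p-norm with exponent `p ∈ (0,∞]`. -/
noncomputable def schattenE {m n : Type*} [Fintype m] [Fintype n] [DecidableEq n]
    (p : ℝ≥0∞) (A : Matrix m n ℝ) : ℝ :=
  if p = ⊤ then specNorm A else schattenF p.toReal A

/-- Number of nonzero entries of a matrix. -/
noncomputable def nnz {m n : Type*} [Fintype m] [Fintype n] (A : Matrix m n ℝ) : ℕ :=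
  (Finset.univ.filter fun ij : m × n => A ij.1 ij.2 ≠ 0).card

/-! ### Auxiliary lemmas -/

/-- Existence of nested "top" sets. -/
lemma exists_topset {n : ℕ} (f : Fin n → ℝ) (S₀ : Finset (Fin n))
    (h₀ : ∀ i ∈ S₀, ∀ j ∉ S₀, f j ≤ f i) (m : ℕ) (hm1 : S₀.card ≤ m) (hm2 : m ≤ n) :
    ∃ T : Finset (Fin n), S₀ ⊆ T ∧ T.card = m ∧ ∀ i ∈ T, ∀ j ∉ T, f j ≤ f i := by
  induction m with
  | zero =>
    exact ⟨S₀, subset_rfl, Nat.le_zero.1 hm1, h₀⟩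
  | succ k ih =>
    rcases Nat.lt_or_ge S₀.card (k+1) with h | h
    · obtain ⟨T, hsub, hcard, htop⟩ := ih (by omega) (by omega)
      have hne : (Tᶜ : Finset (Fin n)).Nonempty := by
        rw [← Finset.card_pos, Finset.card_compl, Fintype.card_fin, hcard]; omega
      obtain ⟨j0, hj0, hmax⟩ := Finset.exists_max_image (Tᶜ) f hne
      have hj0T : j0 ∉ T := Finset.mem_compl.1 hj0
      refine ⟨insert j0 T, hsub.trans (Finset.subset_insert _ _), ?_, ?_⟩
      · rw [Finset.card_insert_of_notMem hj0T, hcard]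
      · intro i hi j hj
        have hjT : j ∉ T := fun h' => hj (Finset.mem_insert_of_mem h')
        rcases Finset.mem_insert.1 hi with rfl | hi'
        · exact hmax j (Finset.mem_compl.2 hjT)
        · exact htop i hi' j hjT
    · exact ⟨S₀, subset_rfl, le_antisymm hm1 h, h₀⟩

/-- A top set captures at least as much mass as any set of no larger cardinality. -/
lemma topset_sum_ge {n : ℕ} (g : Fin n → ℝ) (hg : ∀ i, 0 ≤ g i)
    (T W : Finset (Fin n)) (htop : ∀ i ∈ T, ∀ j ∉ T, g j ≤ g i)
    (hcard : W.card ≤ T.card) : ∑ i ∈ W, g i ≤ ∑ i ∈ T, g i := by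
  have h1 : ∑ i ∈ W \ T, g i ≤ ∑ i ∈ T \ W, g i := by
    rcases (T \ W).eq_empty_or_nonempty with he | hne
    · have hTW : T ⊆ W := by rwa [Finset.sdiff_eq_empty_iff_subset] at he
      have hWT : W = T := (Finset.eq_of_subset_of_card_le hTW hcard).symm
      simp [hWT]
    · obtain ⟨i0, hi0, hmin⟩ := Finset.exists_min_image (T \ W) g hne
      have hub : ∀ j ∈ W \ T, g j ≤ g i0 := fun j hj =>
        htop i0 (Finset.mem_sdiff.1 hi0).1 j (Finset.mem_sdiff.1 hj).2
      have hc : (W \ T).card ≤ (T \ W).card := by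
        have e1 := Finset.card_sdiff_add_card_inter W T
        have e2 := Finset.card_sdiff_add_card_inter T W
        rw [Finset.inter_comm] at e2
        omega
      calc ∑ i ∈ W \ T, g i ≤ (W \ T).card • g i0 := Finset.sum_le_card_nsmul _ _ _ hub
        _ ≤ (T \ W).card • g i0 := by
            rw [nsmul_eq_mul, nsmul_eq_mul]
            exact mul_le_mul_of_nonneg_right (by exact_mod_cast hc) (hg i0)
        _ ≤ ∑ i ∈ T \ W, g i := Finset.card_nsmul_le_sum _ _ _ hmin
  have e1 := Finset.sum_inter_add_sum_sdiff W T g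
  have e2 := Finset.sum_inter_add_sum_sdiff T W g
  rw [Finset.inter_comm] at e2
  linarith

/-- Power mean / Jensen for `rpow`. -/
lemma sum_rpow_le_card_rpow {n : ℕ} (S : Finset (Fin n)) (hS : S.Nonempty) (g : Fin n → ℝ)
    (hg : ∀ i, 0 ≤ g i) {β : ℝ} (hβ : 1 ≤ β) :
    (∑ i ∈ S, g i) ^ β ≤ (S.card : ℝ) ^ (β - 1) * ∑ i ∈ S, g i ^ β := by
  set c : ℝ := (S.card : ℝ) with hcdef
  have hc0 : 0 < c := by rw [hcdef]; exact_mod_cast Finset.card_pos.2 hS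
  have hsum1 : ∑ _i ∈ S, (1/c) = 1 := by
    rw [Finset.sum_const, nsmul_eq_mul]
    field_simp
    exact hcdef.symm
  have h := Real.rpow_arith_mean_le_arith_mean_rpow S (fun _ => 1/c) g
    (fun i _ => by positivity) hsum1 (fun i _ => hg i) hβ
  rw [← Finset.mul_sum, Real.mul_rpow (by positivity) (Finset.sum_nonneg fun i _ => hg i),
    ← Finset.mul_sum] at h
  have h2 : (∑ i ∈ S, g i) ^ β ≤ c ^ β * ((1/c) * ∑ i ∈ S, g i ^ β) := by
    have h3 := mul_le_mul_of_nonneg_left h (le_of_lt (Real.rpow_pos_of_pos hc0 β))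
    calc (∑ i ∈ S, g i)^β = c^β * ((1/c)^β * (∑ i ∈ S, g i)^β) := by
          rw [← mul_assoc, ← Real.mul_rpow (le_of_lt hc0) (by positivity),
            mul_one_div, div_self (ne_of_gt hc0), Real.one_rpow, one_mul]
      _ ≤ c^β * ((1/c) * ∑ i ∈ S, g i ^ β) := h3
  calc (∑ i ∈ S, g i) ^ β ≤ c ^ β * ((1/c) * ∑ i ∈ S, g i ^ β) := h2
    _ = c ^ (β-1) * ∑ i ∈ S, g i ^ β := by
        rw [Real.rpow_sub hc0, Real.rpow_one]; ring

lemma amgm_w {w γ : ℝ} (hw0 : 0 ≤ w) (hw1 : w ≤ 1) (hγ : 0 < γ) :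
    w ^ γ * (1 - w) ≤ γ ^ γ / (1+γ) ^ (1+γ) := by
  have h1γ : (0:ℝ) < 1 + γ := by linarith
  rcases eq_or_lt_of_le hw0 with h0 | h0
  · rw [← h0, Real.zero_rpow (ne_of_gt hγ), zero_mul]
    positivity
  have h := Real.geom_mean_le_arith_mean2_weighted
      (w₁ := γ/(1+γ)) (w₂ := 1/(1+γ)) (p₁ := w/γ) (p₂ := 1-w)
      (by positivity) (by positivity) (by positivity) (by linarith) (by field_simp; ring)
  have hrhs : (γ/(1+γ))*(w/γ) + (1/(1+γ))*(1-w) = 1/(1+γ) := by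
    have hγne : γ ≠ 0 := ne_of_gt hγ
    field_simp
    ring
  rw [hrhs] at h
  have h2 := Real.rpow_le_rpow (mul_nonneg (Real.rpow_nonneg (by positivity) _) (Real.rpow_nonneg (by linarith) _)) h (le_of_lt h1γ)
  have hwγ : (0:ℝ) ≤ w/γ := by positivity
  rw [Real.mul_rpow (Real.rpow_nonneg (by positivity) _) (Real.rpow_nonneg (by linarith) _),
    ← Real.rpow_mul hwγ, ← Real.rpow_mul (by linarith : (0:ℝ) ≤ 1-w),
    div_mul_cancel₀ _ (ne_of_gt h1γ),
    one_div, inv_mul_cancel₀ (ne_of_gt h1γ), Real.rpow_one] at h2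
  have h3 : ((1+γ:ℝ))⁻¹^(1+γ) = 1/(1+γ)^(1+γ) := by
    rw [Real.inv_rpow (le_of_lt h1γ), one_div]
  rw [h3] at h2
  have hγγ : (0:ℝ) < γ^γ := Real.rpow_pos_of_pos hγ γ
  have h4 : (w/γ)^γ = w^γ/γ^γ := Real.div_rpow hw0 (le_of_lt hγ) γ
  rw [h4] at h2
  calc w ^ γ * (1-w) = γ^γ * (w^γ/γ^γ * (1-w)) := by
        field_simp
    _ ≤ γ^γ * (1/(1+γ)^(1+γ)) := by
        exact mul_le_mul_of_nonneg_left h2 (le_of_lt hγγ)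
    _ = γ ^ γ / (1+γ) ^ (1+γ) := by ring

lemma ksf {w γ δ : ℝ} (hw0 : 0 ≤ w) (hw1 : w ≤ 1) (hγ : 0 < γ)
    (hδ0 : 0 < δ) (hδ1 : δ ≤ 3/4) :
    w ^ γ * (1 - w) * (1 - δ ^ (1+γ)) ≤ 4 ^ γ * (1 - δ) ^ (1+γ) := by
  have h1γ : (0:ℝ) < 1 + γ := by linarith
  have h1δ : (0:ℝ) < 1 - δ := by linarith
  have h1 : w ^ γ * (1 - w) ≤ γ ^ γ / (1+γ) ^ (1+γ) := amgm_w hw0 hw1 hγ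
  have hber : 1 - δ^(1+γ) ≤ (1+γ)*(1-δ) := by
    have hb := one_add_mul_self_le_rpow_one_add (s := δ - 1) (by linarith) (p := 1+γ) (by linarith)
    have h' : (1:ℝ) + (δ-1) = δ := by ring
    rw [h'] at hb
    nlinarith
  have hδβ : δ^(1+γ) ≤ 1 := Real.rpow_le_one (le_of_lt hδ0) (by linarith) (le_of_lt h1γ)
  have hmul : w^γ*(1-w)*(1-δ^(1+γ)) ≤ (γ^γ/(1+γ)^(1+γ)) * ((1+γ)*(1-δ)) := by
    apply mul_le_mul h1 hber (by linarith) (by positivity)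
  refine le_trans hmul ?_
  have hkey : γ^γ ≤ 4^γ*(1+γ)^γ*(1-δ)^γ := by
    have h4 : γ ≤ 4*(1+γ)*(1-δ) := by nlinarith
    calc γ^γ ≤ (4*(1+γ)*(1-δ))^γ := Real.rpow_le_rpow (le_of_lt hγ) h4 (le_of_lt hγ)
      _ = 4^γ*(1+γ)^γ*(1-δ)^γ := by
          rw [Real.mul_rpow (by positivity) (le_of_lt h1δ),
            Real.mul_rpow (by norm_num) (le_of_lt h1γ)]
  have e1 : ((1+γ):ℝ)^(1+γ) = (1+γ)*(1+γ)^γ := by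
    rw [Real.rpow_add h1γ, Real.rpow_one]
  have e2 : ((1-δ):ℝ)^(1+γ) = (1-δ)*(1-δ)^γ := by
    rw [Real.rpow_add h1δ, Real.rpow_one]
  rw [e1, e2]
  have ha : (0:ℝ) < (1+γ)^γ := Real.rpow_pos_of_pos h1γ γ
  rw [div_mul_eq_mul_div, div_le_iff₀ (by positivity)]
  have h5 := mul_le_mul_of_nonneg_right hkey (le_of_lt h1δ)
  calc γ^γ * ((1+γ)*(1-δ)) = γ^γ*(1-δ)*(1+γ) := by ring
    _ ≤ 4^γ*(1+γ)^γ*(1-δ)^γ*(1-δ)*(1+γ) := by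
        apply mul_le_mul_of_nonneg_right (by nlinarith) (le_of_lt h1γ)
    _ = 4^γ*((1-δ)*(1-δ)^γ)*((1+γ)*(1+γ)^γ) := by ring

lemma core_ineq {γ δ P c τ : ℝ} (hγ : 0 < γ) (hδ0 : 0 < δ) (hδ1 : δ ≤ 3/4)
    (hP : 0 < P) (hc : 0 < c) (hτ : 0 ≤ τ) :
    τ^γ * (δ*P - c*τ) * (1 - δ^(1+γ)) ≤
      δ^(1+γ) * ((c/4)^(-γ) * ((1-δ)*P)^(1+γ) + c*τ^(1+γ)) := by
  have h1γ : (0:ℝ) < 1 + γ := by linarith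
  have h1δ : (0:ℝ) < 1 - δ := by linarith
  have hδβ : δ^(1+γ) ≤ 1 := Real.rpow_le_one (le_of_lt hδ0) (by linarith) (le_of_lt h1γ)
  have hRnn : 0 ≤ δ^(1+γ) * ((c/4)^(-γ) * ((1-δ)*P)^(1+γ) + c*τ^(1+γ)) := by positivity
  rcases le_or_gt (δ*P) (c*τ) with hcase | hcase
  · refine le_trans ?_ hRnn
    have h0 : τ^γ * (δ*P - c*τ) ≤ 0 :=
      mul_nonpos_of_nonneg_of_nonpos (Real.rpow_nonneg hτ γ) (by linarith)
    exact mul_nonpos_of_nonpos_of_nonneg h0 (by linarith)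
  · set w := c*τ/(δ*P) with hwdef
    have hδP : (0:ℝ) < δ*P := by positivity
    have hw0 : 0 ≤ w := by positivity
    have hw1 : w ≤ 1 := by
      rw [hwdef, div_le_one hδP]; linarith
    have hKSF := ksf hw0 hw1 hγ hδ0 hδ1
    have e1 : τ = (δ*P/c)*w := by
      rw [hwdef]; field_simp
    have e1' : τ^γ = (δ*P/c)^γ * w^γ := by
      rw [e1, Real.mul_rpow (by positivity) hw0]
    have e2 : δ*P - c*τ = (δ*P)*(1-w) := by
      rw [hwdef]; field_simp
    have key : (δ*P/c)^γ * (δ*P) * (4^γ*(1-δ)^(1+γ)) =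
        δ^(1+γ) * ((c/4)^(-γ) * ((1-δ)*P)^(1+γ)) := by
      rw [Real.div_rpow (by positivity) (le_of_lt hc) γ,
        Real.mul_rpow (le_of_lt hδ0) (le_of_lt hP),
        Real.rpow_neg (by positivity) γ,
        Real.div_rpow (le_of_lt hc) (by norm_num) γ,
        Real.mul_rpow (le_of_lt h1δ) (le_of_lt hP),
        Real.rpow_add hδ0, Real.rpow_one,
        Real.rpow_add h1δ, Real.rpow_one,
        Real.rpow_add hP, Real.rpow_one]
      have h4γ : (0:ℝ) < 4^γ := by positivity
      have hcγ : (0:ℝ) < c^γ := Real.rpow_pos_of_pos hc γ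
      field_simp
    calc τ^γ * (δ*P - c*τ) * (1 - δ^(1+γ))
        = ((δ*P/c)^γ * (δ*P)) * (w^γ * (1-w) * (1 - δ^(1+γ))) := by
          rw [e1', e2]; ring
      _ ≤ ((δ*P/c)^γ * (δ*P)) * (4^γ * (1-δ)^(1+γ)) := by
          apply mul_le_mul_of_nonneg_left hKSF (by positivity)
      _ = δ^(1+γ) * ((c/4)^(-γ) * ((1-δ)*P)^(1+γ)) := key
      _ ≤ δ^(1+γ) * ((c/4)^(-γ) * ((1-δ)*P)^(1+γ) + c*τ^(1+γ)) := by
          apply mul_le_mul_of_nonneg_left _ (Real.rpow_nonneg (le_of_lt hδ0) _)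
          have h0 : 0 ≤ c*τ^(1+γ) := by positivity
          linarith

set_option maxHeartbeats 2000000 in
/-- with the universal constant `C = 5`, an `(ε, ℓ_p, s)`-norm sparsifier
implies an `(ε, ℓ_q, 5s)`-norm sparsifier of the form `x_head(k)` for some `k ≤ 5s`. -/
theorem stmt0 (n s : ℕ) (hs : 0 < s) (p q ε : ℝ) (hp : 1 ≤ p) (hpq : p < q)
    (hε0 : 0 < ε) (hε1 : ε < 1 / Real.exp 1) (x x' : Fin n → ℝ)
    (hx'nnz : nnzv x' ≤ s) (hx' : lpNorm p (x - x') ≤ ε * lpNorm p x) :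
    ∃ k ≤ 5 * s, ∃ y : Fin n → ℝ, IsHead x k y ∧ nnzv y ≤ 5 * s ∧
      lpNorm q (x - y) ≤ ε * lpNorm q x := by
  classical
  have hp0 : (0:ℝ) < p := lt_of_lt_of_le one_pos hp
  have hq0 : (0:ℝ) < q := by linarith
  have hlpxq : 0 ≤ lpNorm q x :=
    Real.rpow_nonneg (Finset.sum_nonneg fun i _ => Real.rpow_nonneg (abs_nonneg _) q) _
  rcases le_or_gt n (5*s) with hn | hn
  · -- trivial case: keep everything
    refine ⟨5*s, le_refl _, x, ⟨Finset.univ, ?_, fun i _ => rfl,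
      fun i hi => absurd (Finset.mem_univ i) hi,
      fun i _ j hj => absurd (Finset.mem_univ j) hj⟩, ?_, ?_⟩
    · rw [Finset.card_univ, Fintype.card_fin]; omega
    · calc nnzv x ≤ Finset.univ.card := Finset.card_le_card (Finset.filter_subset _ _)
        _ = n := by rw [Finset.card_univ, Fintype.card_fin]
        _ ≤ 5*s := hn
    · have h0 : lpNorm q (x - x) = 0 := by
        simp only [lpNorm, sub_self, Pi.zero_apply, abs_zero, Real.zero_rpow (ne_of_gt hq0),
          Finset.sum_const_zero]
        exact Real.zero_rpow (one_div_ne_zero (ne_of_gt hq0))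
      rw [h0]
      exact mul_nonneg (le_of_lt hε0) hlpxq
  · -- main case : 5s < n
    have hsn : s ≤ n := by omega
    have h5sn : 5*s ≤ n := by omega
    have htriv : ∀ i ∈ (∅ : Finset (Fin n)), ∀ j ∉ (∅ : Finset (Fin n)),
        (fun i => |x i|) j ≤ (fun i => |x i|) i := by simp
    obtain ⟨S, -, hScard, hStop⟩ := exists_topset (fun i => |x i|) ∅ htriv s (by simp) hsn
    obtain ⟨T, hST, hTcard, hTtop⟩ :=
      exists_topset (fun i => |x i|) S hStop (5*s) (by rw [hScard]; omega) h5sn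
    set y : Fin n → ℝ := fun i => if i ∈ T then x i else 0 with hydef
    refine ⟨5*s, le_refl _, y, ⟨T, ?_, ?_, ?_, ?_⟩, ?_, ?_⟩
    · rw [hTcard]; omega
    · intro i hi; simp [hydef, hi]
    · intro i hi; simp [hydef, hi]
    · exact hTtop
    · have hsubT : (Finset.univ.filter fun i => y i ≠ 0) ⊆ T := by
        intro i hi
        rcases Finset.mem_filter.1 hi with ⟨-, hne⟩
        by_contra hiT
        exact hne (by simp [hydef, hiT])
      calc nnzv y ≤ T.card := Finset.card_le_card hsubT
        _ ≤ 5*s := le_of_eq hTcard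
    · -- the norm bound
      set γ : ℝ := q/p - 1 with hγdef
      have hγ : 0 < γ := by
        rw [hγdef, sub_pos]; exact (one_lt_div hp0).2 hpq
      have hpβ : p*(1+γ) = q := by rw [hγdef]; field_simp; ring
      have hpγ : p*γ = q - p := by rw [hγdef]; field_simp
      have hexp1 : (4/3:ℝ) < Real.exp 1 := by
        have := Real.exp_one_gt_d9; linarith
      have hε34 : ε < 3/4 := by
        have h1 : 1 / Real.exp 1 < 3/4 := by
          rw [div_lt_iff₀ (Real.exp_pos 1)]
          nlinarith
        linarith
      have hε1' : ε < 1 := by linarith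
      set δ : ℝ := ε ^ p with hδdef
      have hδ0 : 0 < δ := Real.rpow_pos_of_pos hε0 p
      have hδε : δ ≤ ε := by
        rw [hδdef]
        calc ε ^ p ≤ ε ^ (1:ℝ) := Real.rpow_le_rpow_of_exponent_ge hε0 (le_of_lt hε1') hp
          _ = ε := Real.rpow_one ε
      have hδ34 : δ ≤ 3/4 := by linarith
      have hδ1 : δ < 1 := by linarith
      have hEq : δ ^ (1+γ) = ε ^ q := by
        rw [hδdef, ← Real.rpow_mul (le_of_lt hε0), hpβ]
      set P : ℝ := ∑ i, |x i| ^ p with hPdef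
      set Q : ℝ := ∑ i, |x i| ^ q with hQdef
      have hPnn : 0 ≤ P := Finset.sum_nonneg fun i _ => Real.rpow_nonneg (abs_nonneg _) _
      have hQnn : 0 ≤ Q := Finset.sum_nonneg fun i _ => Real.rpow_nonneg (abs_nonneg _) _
      have hsub_nn : 0 ≤ ∑ i, |x i - x' i| ^ p :=
        Finset.sum_nonneg fun i _ => Real.rpow_nonneg (abs_nonneg _) _
      have hxp : ∑ i, |x i - x' i| ^ p ≤ δ * P := by
        have h1 : (∑ i, |x i - x' i| ^ p) ^ (1/p) ≤ ε * P ^ (1/p) := by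
          simpa [lpNorm] using hx'
        have h2 := Real.rpow_le_rpow (Real.rpow_nonneg hsub_nn _) h1 (le_of_lt hp0)
        rw [← Real.rpow_mul hsub_nn, one_div, inv_mul_cancel₀ (ne_of_gt hp0), Real.rpow_one,
          Real.mul_rpow (le_of_lt hε0) (Real.rpow_nonneg hPnn _),
          ← Real.rpow_mul hPnn, inv_mul_cancel₀ (ne_of_gt hp0), Real.rpow_one] at h2
        exact h2
      set W := Finset.univ.filter (fun i => x' i ≠ 0) with hWdef
      have hWcard : W.card ≤ s := hx'nnz
      have hWsum : ∑ i ∈ Wᶜ, |x i| ^ p ≤ δ * P := by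
        have hcongr : ∑ i ∈ Wᶜ, |x i| ^ p = ∑ i ∈ Wᶜ, |x i - x' i| ^ p := by
          apply Finset.sum_congr rfl
          intro i hi
          have hx'i : x' i = 0 := by
            have hmem := Finset.mem_compl.1 hi
            rw [hWdef] at hmem
            simpa using hmem
          rw [hx'i, sub_zero]
        rw [hcongr]
        refine le_trans (Finset.sum_le_sum_of_subset_of_nonneg (Finset.subset_univ _) ?_) hxp
        intro i _ _; positivity
      have hStopP : ∀ i ∈ S, ∀ j ∉ S, |x j| ^ p ≤ |x i| ^ p :=
        fun i hi j hj => Real.rpow_le_rpow (abs_nonneg _) (hStop i hi j hj) (le_of_lt hp0)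
      have hSW : ∑ i ∈ W, |x i| ^ p ≤ ∑ i ∈ S, |x i| ^ p :=
        topset_sum_ge _ (fun i => by positivity) S W hStopP (by rw [hScard]; exact hWcard)
      have hsplitS := Finset.sum_add_sum_compl S (fun i => |x i| ^ p)
      have hsplitW := Finset.sum_add_sum_compl W (fun i => |x i| ^ p)
      have hsplitT := Finset.sum_add_sum_compl T (fun i => |x i| ^ p)
      have hsdiff := Finset.sum_sdiff hST (f := fun i => |x i| ^ p)
      rw [← hPdef] at hsplitS hsplitW hsplitT
      have hDp : ∑ i ∈ Sᶜ, |x i| ^ p ≤ δ * P := by linarith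
      -- the threshold value
      have hTc_ne : (Tᶜ : Finset (Fin n)).Nonempty := by
        rw [← Finset.card_pos, Finset.card_compl, Fintype.card_fin, hTcard]; omega
      obtain ⟨j0, hj0, hj0max⟩ := Finset.exists_max_image (Tᶜ) (fun i => |x i|) hTc_ne
      have htnn : (0:ℝ) ≤ |x j0| := abs_nonneg _
      have htail : ∀ j, j ∉ T → |x j| ≤ |x j0| := fun j hj => hj0max j (Finset.mem_compl.2 hj)
      have hmid : ∀ i ∈ T, |x j0| ≤ |x i| := fun i hi => hTtop i hi j0 (Finset.mem_compl.1 hj0)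
      set τ : ℝ := |x j0| ^ p with hτdef
      have hτnn : 0 ≤ τ := Real.rpow_nonneg htnn p
      have hτγ : τ ^ γ = |x j0| ^ (q-p) := by rw [hτdef, ← Real.rpow_mul htnn, hpγ]
      have hτβ : τ ^ (1+γ) = |x j0| ^ q := by rw [hτdef, ← Real.rpow_mul htnn, hpβ]
      have hTScard : (T \ S).card = 4*s := by
        rw [Finset.card_sdiff_of_subset hST, hTcard, hScard]; omega
      have hmidp : (4*(s:ℝ)) * τ ≤ ∑ i ∈ T \ S, |x i| ^ p := by
        have h := Finset.card_nsmul_le_sum (T \ S) (fun i => |x i| ^ p) τ ?_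
        · rw [hTScard, nsmul_eq_mul] at h
          push_cast at h
          convert h using 2
        · intro i hi
          rw [hτdef]
          exact Real.rpow_le_rpow htnn (hmid i (Finset.mem_sdiff.1 hi).1) (le_of_lt hp0)
      have hmidq : (4*(s:ℝ)) * τ^(1+γ) ≤ ∑ i ∈ T \ S, |x i| ^ q := by
        rw [hτβ]
        have h := Finset.card_nsmul_le_sum (T \ S) (fun i => |x i| ^ q) (|x j0| ^ q) ?_
        · rw [hTScard, nsmul_eq_mul] at h
          push_cast at h
          convert h using 2
        · intro i hi
          exact Real.rpow_le_rpow htnn (hmid i (Finset.mem_sdiff.1 hi).1) (le_of_lt hq0)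
      have hDp'' : ∑ i ∈ Tᶜ, |x i| ^ p ≤ δ*P - (4*(s:ℝ))*τ := by linarith
      have htailq : ∑ i ∈ Tᶜ, |x i| ^ q ≤ τ^γ * ∑ i ∈ Tᶜ, |x i| ^ p := by
        rw [Finset.mul_sum]
        apply Finset.sum_le_sum
        intro i hi
        have hiT : i ∉ T := Finset.mem_compl.1 hi
        have e : |x i|^(q-p) * |x i|^p = |x i| ^ q := by
          rw [← Real.rpow_add' (abs_nonneg _) (by intro hcon; exact (ne_of_gt hq0) (by linarith))]
          congr 1
          ring
        rw [← e, hτγ]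
        exact mul_le_mul_of_nonneg_right
          (Real.rpow_le_rpow (abs_nonneg _) (htail i hiT) (by linarith))
          (Real.rpow_nonneg (abs_nonneg _) _)
      -- Jensen on the head
      have hSne : S.Nonempty := Finset.card_pos.1 (by rw [hScard]; omega)
      have hjen := sum_rpow_le_card_rpow S hSne (fun i => |x i| ^ p)
        (fun i => by positivity) (β := 1+γ) (by linarith)
      rw [hScard] at hjen
      have hjen2 : (∑ i ∈ S, |x i| ^ p)^(1+γ) ≤ (s:ℝ)^γ * ∑ i ∈ S, |x i| ^ q := by
        refine le_trans hjen (le_of_eq ?_)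
        rw [show (1+γ) - 1 = γ by ring]
        congr 1
        refine Finset.sum_congr rfl (fun i _ => ?_)
        show (|x i| ^ p) ^ (1+γ) = |x i| ^ q
        rw [← Real.rpow_mul (abs_nonneg _), hpβ]
      have hHp : (1-δ)*P ≤ ∑ i ∈ S, |x i| ^ p := by
        have hexp : (1-δ)*P = P - δ*P := by ring
        linarith
      have hhead : ((1-δ)*P)^(1+γ) ≤ (s:ℝ)^γ * ∑ i ∈ S, |x i| ^ q :=
        le_trans (Real.rpow_le_rpow (mul_nonneg (by linarith) hPnn) hHp (by linarith)) hjen2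
      have hsγ : (0:ℝ) < (s:ℝ)^γ := Real.rpow_pos_of_pos (by exact_mod_cast hs) γ
      have hheadinv : (s:ℝ)^(-γ) * ((1-δ)*P)^(1+γ) ≤ ∑ i ∈ S, |x i| ^ q := by
        rw [Real.rpow_neg (by positivity), inv_mul_le_iff₀ hsγ]
        exact hhead
      -- the key bound Dq ≤ ε^q Q
      have hkey : ∑ i ∈ Tᶜ, |x i| ^ q ≤ ε^q * Q := by
        rcases eq_or_lt_of_le hPnn with hP0 | hPpos
        · have hx0 : ∀ i ∈ Finset.univ, |x i| ^ p = (0:ℝ) := by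
            refine (Finset.sum_eq_zero_iff_of_nonneg (fun i _ => by positivity)).1 ?_
            rw [← hPdef, ← hP0]
          have hxq0 : ∀ i, |x i| ^ q = (0:ℝ) := by
            intro i
            have h1 := hx0 i (Finset.mem_univ i)
            have h2 : |x i| = 0 :=
              ((Real.rpow_eq_zero_iff_of_nonneg (abs_nonneg _)).1 h1).1
            rw [h2]
            exact Real.zero_rpow (ne_of_gt hq0)
          have : ∑ i ∈ Tᶜ, |x i| ^ q = 0 := Finset.sum_eq_zero (fun i _ => hxq0 i)
          rw [this]
          positivity
        · have hci := core_ineq (γ:=γ) (δ:=δ) (P:=P) (c:=(4*(s:ℝ))) (τ:=τ)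
            hγ hδ0 hδ34 hPpos (by positivity) hτnn
          rw [show ((4*(s:ℝ))/4) = (s:ℝ) by ring] at hci
          have hδβ1 : δ^(1+γ) ≤ 1 :=
            Real.rpow_le_one (le_of_lt hδ0) (by linarith) (by linarith)
          have h7 : ∑ i ∈ Tᶜ, |x i| ^ q ≤ τ^γ * (δ*P - (4*(s:ℝ))*τ) :=
            le_trans htailq (mul_le_mul_of_nonneg_left hDp'' (Real.rpow_nonneg hτnn _))
          have hsplitTq := Finset.sum_add_sum_compl T (fun i => |x i| ^ q)
          have hsdiffq := Finset.sum_sdiff hST (f := fun i => |x i| ^ q)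
          rw [← hQdef] at hsplitTq
          have h9 : (s:ℝ)^(-γ) * ((1-δ)*P)^(1+γ) + (4*(s:ℝ))*τ^(1+γ)
              ≤ Q - ∑ i ∈ Tᶜ, |x i| ^ q := by linarith
          have h10 : (∑ i ∈ Tᶜ, |x i| ^ q) * (1 - δ^(1+γ)) ≤ δ^(1+γ) * (Q - ∑ i ∈ Tᶜ, |x i| ^ q) := by
            refine le_trans (mul_le_mul_of_nonneg_right h7 (by linarith)) (le_trans hci ?_)
            exact mul_le_mul_of_nonneg_left h9 (Real.rpow_nonneg (le_of_lt hδ0) _)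
          have e1 : (∑ i ∈ Tᶜ, |x i| ^ q) * (1 - δ^(1+γ))
              = (∑ i ∈ Tᶜ, |x i| ^ q) - δ^(1+γ) * (∑ i ∈ Tᶜ, |x i| ^ q) := by ring
          have e2 : δ^(1+γ) * (Q - ∑ i ∈ Tᶜ, |x i| ^ q)
              = δ^(1+γ)*Q - δ^(1+γ) * (∑ i ∈ Tᶜ, |x i| ^ q) := by ring
          rw [← hEq]
          linarith
      -- conclude
      show lpNorm q (x - y) ≤ ε * lpNorm q x
      have hsum_eq : ∑ i, |(x - y) i| ^ q = ∑ i ∈ Tᶜ, |x i| ^ q := by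
        rw [show (∑ i, |(x - y) i| ^ q) = ∑ i, (if i ∈ T then 0 else |x i| ^ q) from
          Finset.sum_congr rfl ?_]
        · rw [Finset.sum_ite, Finset.sum_const_zero, zero_add]
          congr 1
          ext i
          simp [Finset.mem_compl]
        · intro i _
          by_cases hi : i ∈ T
          · simp [Pi.sub_apply, hydef, hi, Real.zero_rpow (ne_of_gt hq0)]
          · simp [Pi.sub_apply, hydef, hi]
      have hfin := Real.rpow_le_rpow
        (Finset.sum_nonneg fun i _ => Real.rpow_nonneg (abs_nonneg _) _) hkey
        (by positivity : (0:ℝ) ≤ 1/q)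
      rw [Real.mul_rpow (by positivity) hQnn, ← Real.rpow_mul (le_of_lt hε0),
        mul_one_div, div_self (ne_of_gt hq0), Real.rpow_one] at hfin
      show (∑ i, |(x - y) i| ^ q) ^ (1/q) ≤ ε * (∑ i, |x i| ^ q) ^ (1/q)
      rw [hsum_eq, ← hQdef]
      exact hfin
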